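/- For every 0 < α < 1 and ε > 0, there exists a set A of positive integers with lower asymptotic density greater than α such that the product set B = A·A has upper asymptotic density less than ε. -/

import Mathlib

/-- The lower asymptotic density of a set of natural numbers. -/
noncomputable def lowerDensity (A : Set ℕ) : ℝ :=
  Filter.liminf (fun N : ℕ => (Nat.card (A ∩ Set.Icc 1 N : Set ℕ) : ℝ) / N) Filter.atTop

/-- The upper asymptotic density of a set of natural numbers. -/
noncomputable def upperDensity (A : Set ℕ) : ℝ :=
  Filter.limsup (fun N : ℕ => (Nat.card (A ∩ Set.Icc 1 N : Set ℕ) : ℝ) / N) Filter.atTop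

open Filter Finset

section Aux

/-- counting via Finsets -/
lemma sk_count_eq (S : Set ℕ) [DecidablePred (fun n => n ∈ S)] (N : ℕ) :
    Nat.card (S ∩ Set.Icc 1 N : Set ℕ)
      = ((Finset.Icc 1 N).filter (fun n => n ∈ S)).card := by
  classical
  have h : (S ∩ Set.Icc 1 N : Set ℕ)
      = ↑((Finset.Icc 1 N).filter (fun n => n ∈ S)) := by
    ext n
    simp only [Set.mem_inter_iff, Set.mem_Icc, Finset.coe_filter, Set.mem_setOf_eq,
      Finset.mem_Icc]
    tauto
  rw [h, Nat.card_coe_set_eq, Set.ncard_coe_finset]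

/-- periodic counting over full periods -/
lemma sk_F_mul (Q : ℕ) (T : Finset ℕ) (hT : T ⊆ Finset.range Q) (m : ℕ) :
    ((Finset.range (m * Q)).filter (fun n => n % Q ∈ T)).card = m * T.card := by
  induction m with
  | zero => simp
  | succ m ih =>
    have hsplit : Finset.range ((m + 1) * Q) =
        Finset.range (m * Q) ∪ Finset.Ico (m * Q) (m * Q + Q) := by
      have hm : (m + 1) * Q = m * Q + Q := by ring
      rw [hm, Finset.range_eq_Ico, Finset.range_eq_Ico]
      exact (Finset.Ico_union_Ico_eq_Ico (Nat.zero_le _) (Nat.le_add_right _ _)).symm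
    have hdisj : Disjoint (Finset.range (m * Q)) (Finset.Ico (m * Q) (m * Q + Q)) := by
      rw [Finset.range_eq_Ico]
      exact Finset.Ico_disjoint_Ico_consecutive 0 (m * Q) (m * Q + Q)
    have himg : Finset.image (fun r => m * Q + r) (Finset.range Q) =
        Finset.Ico (m * Q) (m * Q + Q) := by
      rw [Finset.range_eq_Ico]
      simpa using Finset.image_add_left_Ico 0 Q (m * Q)
    have hblock : ((Finset.Ico (m * Q) (m * Q + Q)).filter (fun n => n % Q ∈ T)).card
        = T.card := by
      rw [← himg, Finset.filter_image]
      rw [Finset.card_image_of_injective _ (add_right_injective _)]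
      have : ∀ r ∈ Finset.range Q, (m * Q + r) % Q = r := by
        intro r hr
        rw [Nat.add_comm, Nat.add_mul_mod_self_right]
        exact Nat.mod_eq_of_lt (Finset.mem_range.1 hr)
      rw [Finset.filter_congr (fun r hr => by rw [this r hr])]
      rw [Finset.filter_mem_eq_inter, Finset.inter_eq_right.2 hT]
    rw [hsplit, Finset.filter_union, Finset.card_union_of_disjoint
      (Finset.disjoint_filter_filter hdisj), ih, hblock]
    ring

lemma sk_F_mono (Q : ℕ) (T : Finset ℕ) {M M' : ℕ} (h : M ≤ M') :
    ((Finset.range M).filter (fun n => n % Q ∈ T)).card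
      ≤ ((Finset.range M').filter (fun n => n % Q ∈ T)).card := by
  exact Finset.card_le_card (Finset.filter_subset_filter _ (by
    exact Finset.range_subset_range.2 h))

lemma sk_nat_lt (N Q : ℕ) (hQ : 0 < Q) : N < (N / Q + 1) * Q := by
  rw [add_mul, one_mul]
  exact Nat.lt_div_mul_add hQ

lemma sk_count_ge (A : Set ℕ) [DecidablePred (fun n => n ∈ A)] (T : Finset ℕ) (Q : ℕ)
    (hQ : 0 < Q) (hT : T ⊆ Finset.range Q)
    (hA : ∀ n : ℕ, 1 ≤ n → n % Q ∈ T → n ∈ A) (N : ℕ) :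
    (N / Q) * T.card ≤ Nat.card (A ∩ Set.Icc 1 N : Set ℕ) + 1 := by
  rw [sk_count_eq]
  have h1 : ((Finset.range (N / Q * Q)).filter (fun n => n % Q ∈ T)).card ≤
      ((Finset.range (N + 1)).filter (fun n => n % Q ∈ T)).card :=
    sk_F_mono Q T (by have := Nat.div_mul_le_self N Q; omega)
  rw [sk_F_mul Q T hT] at h1
  have h2 : ((Finset.range (N + 1)).filter (fun n => n % Q ∈ T)).card ≤
      ((Finset.Icc 1 N).filter (fun n => n % Q ∈ T)).card + 1 := by
    have hins : Finset.range (N + 1) = insert 0 (Finset.Icc 1 N) := by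
      ext n
      simp only [Finset.mem_range, Finset.mem_insert, Finset.mem_Icc]
      omega
    rw [hins, Finset.filter_insert]
    split
    · exact Finset.card_insert_le _ _
    · omega
  have h3 : ((Finset.Icc 1 N).filter (fun n => n % Q ∈ T)).card ≤
      ((Finset.Icc 1 N).filter (fun n => n ∈ A)).card := by
    apply Finset.card_le_card
    intro n hn
    rw [Finset.mem_filter] at *
    refine ⟨hn.1, hA n ?_ hn.2⟩
    have := Finset.mem_Icc.1 hn.1
    omega
  omega

lemma sk_count_le (S : Set ℕ) [DecidablePred (fun n => n ∈ S)] (T : Finset ℕ) (Q : ℕ)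
    (hQ : 0 < Q) (hT : T ⊆ Finset.range Q) (hS : ∀ m ∈ S, m % Q ∈ T) (N : ℕ) :
    Nat.card (S ∩ Set.Icc 1 N : Set ℕ) ≤ (N / Q + 1) * T.card := by
  rw [sk_count_eq]
  calc ((Finset.Icc 1 N).filter (fun n => n ∈ S)).card
      ≤ ((Finset.range (N + 1)).filter (fun n => n % Q ∈ T)).card := by
        apply Finset.card_le_card
        intro n hn
        rw [Finset.mem_filter] at *
        obtain ⟨h1, h2⟩ := hn
        rw [Finset.mem_Icc] at h1
        exact ⟨Finset.mem_range.2 (by omega), hS n h2⟩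
    _ ≤ ((Finset.range ((N / Q + 1) * Q)).filter (fun n => n % Q ∈ T)).card := by
        apply sk_F_mono
        have := sk_nat_lt N Q hQ
        omega
    _ = (N / Q + 1) * T.card := sk_F_mul Q T hT _

lemma sk_count_le_N (S : Set ℕ) [DecidablePred (fun n => n ∈ S)] (N : ℕ) :
    Nat.card (S ∩ Set.Icc 1 N : Set ℕ) ≤ N := by
  rw [sk_count_eq]
  calc ((Finset.Icc 1 N).filter (fun n => n ∈ S)).card
      ≤ (Finset.Icc 1 N).card := Finset.card_filter_le _ _
    _ = N := by rw [Nat.card_Icc]; omega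

/-- lower density bound for supersets of periodic sets -/
lemma sk_lowerDensity_ge (A : Set ℕ) (T : Finset ℕ) (Q : ℕ) (hQ : 0 < Q)
    (hT : T ⊆ Finset.range Q) (hA : ∀ n : ℕ, 1 ≤ n → n % Q ∈ T → n ∈ A) :
    (T.card : ℝ) / Q ≤ lowerDensity A := by
  classical
  set c : ℝ := (T.card : ℝ) with hc
  have hc0 : 0 ≤ c := Nat.cast_nonneg _
  have hQR : (0 : ℝ) < Q := by exact_mod_cast hQ
  set f : ℕ → ℝ := fun N : ℕ => (Nat.card (A ∩ Set.Icc 1 N : Set ℕ) : ℝ) / N with hf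
  set g : ℕ → ℝ := fun N : ℕ => c / Q - (c + 1) / N with hg
  have key : ∀ N : ℕ, 1 ≤ N → g N ≤ f N := by
    intro N hN
    have hNR : (0 : ℝ) < N := by exact_mod_cast hN
    have hcnt := sk_count_ge A T Q hQ hT hA N
    set d : ℕ := N / Q with hd
    have hcntR : (d : ℝ) * c ≤ (Nat.card (A ∩ Set.Icc 1 N : Set ℕ) : ℝ) + 1 := by
      rw [hc]
      have : ((d * T.card : ℕ) : ℝ) ≤ ((Nat.card (A ∩ Set.Icc 1 N : Set ℕ) + 1 : ℕ) : ℝ) :=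
        Nat.cast_le.2 hcnt
      push_cast at this
      linarith
    have hdR : (N : ℝ) / Q < (d : ℝ) + 1 := by
      rw [div_lt_iff₀ hQR]
      exact_mod_cast sk_nat_lt N Q hQ
    simp only [hg, hf]
    rw [sub_le_iff_le_add, ← add_div, le_div_iff₀ hNR]
    have h1 : c / Q * N ≤ ((d : ℝ) + 1) * c := by
      calc c / Q * N = (N : ℝ) / Q * c := by ring
        _ ≤ ((d : ℝ) + 1) * c := mul_le_mul_of_nonneg_right hdR.le hc0
    linarith [hcntR, h1]
  have hgt : Filter.Tendsto g Filter.atTop (nhds (c / Q)) := by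
    have h0 : Filter.Tendsto (fun N : ℕ => (c + 1) / N) Filter.atTop (nhds 0) :=
      tendsto_const_div_atTop_nhds_zero_nat (c + 1)
    simpa using tendsto_const_nhds.sub h0
  have hliminf : Filter.liminf g Filter.atTop = c / Q := hgt.liminf_eq
  rw [lowerDensity, ← hliminf]
  apply Filter.liminf_le_liminf
  · exact Filter.eventually_atTop.2 ⟨1, key⟩
  · exact hgt.isBoundedUnder_ge
  · apply Filter.IsBoundedUnder.isCoboundedUnder_ge
    refine Filter.isBoundedUnder_of ⟨1, fun N => ?_⟩
    rcases Nat.eq_zero_or_pos N with h | h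
    · simp [hf, h]
    · have hNR : (0 : ℝ) < N := by exact_mod_cast h
      show (Nat.card (A ∩ Set.Icc 1 N : Set ℕ) : ℝ) / N ≤ 1
      rw [div_le_one hNR]
      exact_mod_cast sk_count_le_N A N

/-- upper density bound for subsets of periodic sets -/
lemma sk_upperDensity_le (B : Set ℕ) (T : Finset ℕ) (Q : ℕ) (hQ : 0 < Q)
    (hT : T ⊆ Finset.range Q) (hB : ∀ m ∈ B, m % Q ∈ T) :
    upperDensity B ≤ (T.card : ℝ) / Q := by
  classical
  set c : ℝ := (T.card : ℝ) with hc
  have hc0 : 0 ≤ c := Nat.cast_nonneg _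
  have hQR : (0 : ℝ) < Q := by exact_mod_cast hQ
  set f : ℕ → ℝ := fun N : ℕ => (Nat.card (B ∩ Set.Icc 1 N : Set ℕ) : ℝ) / N with hf
  set g : ℕ → ℝ := fun N : ℕ => c / Q + c / N with hg
  have key : ∀ N : ℕ, 1 ≤ N → f N ≤ g N := by
    intro N hN
    have hNR : (0 : ℝ) < N := by exact_mod_cast hN
    have hcnt := sk_count_le B T Q hQ hT hB N
    set d : ℕ := N / Q with hd
    have hcntR : (Nat.card (B ∩ Set.Icc 1 N : Set ℕ) : ℝ) ≤ ((d : ℝ) + 1) * c := by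
      rw [hc]
      have : ((Nat.card (B ∩ Set.Icc 1 N : Set ℕ) : ℕ) : ℝ) ≤ (((d + 1) * T.card : ℕ) : ℝ) :=
        Nat.cast_le.2 hcnt
      push_cast at this
      linarith
    have hdR : (d : ℝ) ≤ (N : ℝ) / Q := by
      rw [le_div_iff₀ hQR]
      exact_mod_cast Nat.div_mul_le_self N Q
    simp only [hf, hg]
    rw [div_le_iff₀ hNR, add_mul, div_mul_cancel₀ _ hNR.ne']
    have h1 : ((d : ℝ) + 1) * c ≤ (N : ℝ) / Q * c + c := by nlinarith [hdR, hc0]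
    have h3 : (N : ℝ) / Q * c = c / Q * N := by ring
    linarith [hcntR, h1]
  have hgt : Filter.Tendsto g Filter.atTop (nhds (c / Q)) := by
    have h0 : Filter.Tendsto (fun N : ℕ => c / N) Filter.atTop (nhds 0) :=
      tendsto_const_div_atTop_nhds_zero_nat c
    simpa using tendsto_const_nhds.add h0
  have hlimsup : Filter.limsup g Filter.atTop = c / Q := hgt.limsup_eq
  rw [upperDensity, ← hlimsup]
  apply Filter.limsup_le_limsup
  · exact Filter.eventually_atTop.2 ⟨1, key⟩
  · apply Filter.IsBoundedUnder.isCoboundedUnder_le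
    refine Filter.isBoundedUnder_of ⟨0, fun N => ?_⟩
    show (0:ℝ) ≤ (Nat.card (B ∩ Set.Icc 1 N : Set ℕ) : ℝ) / N
    positivity
  · exact hgt.isBoundedUnder_le

/-- count of multiples of a divisor of Q in range Q -/
lemma sk_card_dvd (Q d : ℕ) (hd : 0 < d) (hdQ : d ∣ Q) :
    ((Finset.range Q).filter (fun n => d ∣ n)).card = Q / d := by
  rcases Nat.eq_zero_or_pos Q with hQ | hQ
  · simp [hQ]
  have h1 : Finset.range Q = insert 0 (Finset.Ioo 0 Q) := by
    ext n
    simp only [Finset.mem_range, Finset.mem_insert, Finset.mem_Ioo]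
    omega
  have h2 : Finset.Ioc 0 Q = insert Q (Finset.Ioo 0 Q) := by
    ext n
    simp only [Finset.mem_Ioc, Finset.mem_insert, Finset.mem_Ioo]
    omega
  have key := Nat.Ioc_filter_dvd_card_eq_div Q d
  rw [h2, Finset.filter_insert, if_pos hdQ,
    Finset.card_insert_of_notMem (by simp)] at key
  rw [h1, Finset.filter_insert, if_pos (dvd_zero d),
    Finset.card_insert_of_notMem (by simp)]
  exact key

/-- choice of the prime set -/
lemma sk_primes (y : ℕ) (K : ℝ) (hK : 1 ≤ K) :
    ∃ P : Finset ℕ, (∀ p ∈ P, p.Prime ∧ y < p) ∧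
      K ≤ ∑ p ∈ P, (1 / p : ℝ) ∧ ∑ p ∈ P, (1 / p : ℝ) ≤ K + 1 := by
  classical
  set f : ℕ → ℝ := fun n => if n.Prime ∧ y < n then (1 / n : ℝ) else 0 with hf
  have hf0 : ∀ n, 0 ≤ f n := by
    intro n
    simp only [hf]
    split <;> positivity
  have hf1 : ∀ n, f n ≤ 1 := by
    intro n
    simp only [hf]
    split
    · rename_i h
      rw [div_le_one (by exact_mod_cast h.1.pos)]
      exact_mod_cast h.1.one_lt.le
    · norm_num
  have hns : ¬ Summable f := by
    intro hsum
    apply not_summable_one_div_on_primes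
    have heq : Set.indicator {p : ℕ | p.Prime} (fun n : ℕ => (1 : ℝ) / n)
        = fun n => f n + (if n.Prime ∧ n ≤ y then (1 / n : ℝ) else 0) := by
      funext n
      rw [Set.indicator_apply]
      simp only [hf, Set.mem_setOf_eq]
      by_cases hp : n.Prime <;> by_cases hy : y < n <;>
        simp [hp, hy, Nat.not_lt.1, le_of_not_gt] <;> omega
    rw [heq]
    apply hsum.add
    apply summable_of_ne_finset_zero (s := Finset.range (y + 1))
    intro n hn
    rw [Finset.mem_range] at hn
    rw [if_neg (by omega)]
  have htend := (not_summable_iff_tendsto_nat_atTop_of_nonneg hf0).1 hns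
  have hex : ∃ M, K ≤ ∑ i ∈ Finset.range M, f i :=
    (htend.eventually_ge_atTop K).exists
  set M := Nat.find hex with hM
  have hMs : K ≤ ∑ i ∈ Finset.range M, f i := Nat.find_spec hex
  have hM0 : M ≠ 0 := by
    intro h
    rw [h] at hMs
    simp at hMs
    linarith
  have hMm : ¬ K ≤ ∑ i ∈ Finset.range (M - 1), f i := Nat.find_min hex (by omega)
  push_neg at hMm
  have hub : ∑ i ∈ Finset.range M, f i ≤ K + 1 := by
    have hsp : ∑ i ∈ Finset.range M, f i
        = ∑ i ∈ Finset.range (M - 1), f i + f (M - 1) := by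
      conv_lhs => rw [show M = (M - 1) + 1 by omega]
      rw [Finset.sum_range_succ]
    rw [hsp]
    linarith [hf1 (M - 1)]
  refine ⟨(Finset.range M).filter (fun n => n.Prime ∧ y < n), ?_, ?_, ?_⟩
  · intro p hp
    exact (Finset.mem_filter.1 hp).2
  · rw [Finset.sum_filter]
    exact hMs
  · rw [Finset.sum_filter]
    exact hub

/-- number of primes of `P` dividing `n` -/
def skW (P : Finset ℕ) (n : ℕ) : ℕ := (P.filter (fun p => p ∣ n)).card

section Core

variable (P : Finset ℕ) (y : ℕ) (hP : ∀ p ∈ P, p.Prime ∧ y < p)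

lemma sk_Qpos (hP : ∀ p ∈ P, p.Prime ∧ y < p) : 0 < ∏ p ∈ P, p :=
  Finset.prod_pos fun p hp => (hP p hp).1.pos

lemma sk_W_mod (hP : ∀ p ∈ P, p.Prime ∧ y < p) (n : ℕ) :
    skW P (n % ∏ p ∈ P, p) = skW P n := by
  unfold skW
  congr 1
  apply Finset.filter_congr
  intro p hp
  exact Nat.dvd_mod_iff (Finset.dvd_prod_of_mem _ hp)

lemma sk_sumW (hP : ∀ p ∈ P, p.Prime ∧ y < p) :
    ∑ n ∈ Finset.range (∏ p ∈ P, p), (skW P n : ℝ)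
      = (∏ p ∈ P, p) * ∑ p ∈ P, (1 / p : ℝ) := by
  set Q := ∏ p ∈ P, p with hQ
  have step : ∀ n, (skW P n : ℝ) = ∑ p ∈ P, (if p ∣ n then (1:ℝ) else 0) := by
    intro n
    unfold skW
    rw [Finset.card_filter]
    push_cast
    rfl
  calc ∑ n ∈ Finset.range Q, (skW P n : ℝ)
      = ∑ n ∈ Finset.range Q, ∑ p ∈ P, (if p ∣ n then (1:ℝ) else 0) := by
        exact Finset.sum_congr rfl fun n _ => step n
    _ = ∑ p ∈ P, ∑ n ∈ Finset.range Q, (if p ∣ n then (1:ℝ) else 0) := Finset.sum_comm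
    _ = ∑ p ∈ P, (((Finset.range Q).filter (fun n => p ∣ n)).card : ℝ) := by
        refine Finset.sum_congr rfl fun p _ => ?_
        rw [Finset.card_filter]
        push_cast
        rfl
    _ = ∑ p ∈ P, (Q : ℝ) * (1 / p) := by
        refine Finset.sum_congr rfl fun p hp => ?_
        rw [sk_card_dvd Q p (hP p hp).1.pos (Finset.dvd_prod_of_mem _ hp)]
        rw [Nat.cast_div (Finset.dvd_prod_of_mem _ hp)
          (by exact_mod_cast (hP p hp).1.pos.ne')]
        ring
    _ = (Q : ℝ) * ∑ p ∈ P, (1 / p : ℝ) := by rw [Finset.mul_sum]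

lemma sk_cnt_pair (hP : ∀ p ∈ P, p.Prime ∧ y < p) {p q : ℕ} (hp : p ∈ P) (hq : q ∈ P)
    (hpq : p ≠ q) :
    ((((Finset.range (∏ p ∈ P, p)).filter (fun n => p ∣ n ∧ q ∣ n)).card : ℝ))
      = (∏ p ∈ P, p) * (1 / p) * (1 / q) := by
  set Q := ∏ p ∈ P, p with hQ
  have hco : Nat.Coprime p q := (Nat.coprime_primes (hP p hp).1 (hP q hq).1).2 hpq
  have hdvdQ : p * q ∣ Q := by
    have hsub : ({p, q} : Finset ℕ) ⊆ P := by
      intro x hx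
      rcases Finset.mem_insert.1 hx with h | h
      · exact h ▸ hp
      · exact (Finset.mem_singleton.1 h) ▸ hq
    have := Finset.prod_dvd_prod_of_subset _ _ (fun x : ℕ => x) hsub
    rwa [Finset.prod_pair hpq] at this
  have hpos : 0 < p * q := Nat.mul_pos (hP p hp).1.pos (hP q hq).1.pos
  have hfc : (Finset.range Q).filter (fun n => p ∣ n ∧ q ∣ n)
      = (Finset.range Q).filter (fun n => p * q ∣ n) := by
    apply Finset.filter_congr
    intro n _
    constructor
    · rintro ⟨h1, h2⟩
      exact Nat.Coprime.mul_dvd_of_dvd_of_dvd hco h1 h2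
    · intro h
      exact ⟨dvd_trans (Dvd.intro q rfl) h, dvd_trans (Dvd.intro_left p rfl) h⟩
  rw [hfc, sk_card_dvd Q (p * q) hpos hdvdQ,
    Nat.cast_div hdvdQ (by exact_mod_cast hpos.ne')]
  push_cast
  field_simp

lemma sk_secondMoment (hP : ∀ p ∈ P, p.Prime ∧ y < p) :
    ∑ n ∈ Finset.range (∏ p ∈ P, p), ((skW P n : ℝ) - ∑ p ∈ P, (1 / p : ℝ))^2
      ≤ (∏ p ∈ P, p) * ∑ p ∈ P, (1 / p : ℝ) := by
  classical
  set Q := ∏ p ∈ P, p with hQdef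
  set μ : ℝ := ∑ p ∈ P, (1 / p : ℝ) with hμ
  have hQpos : 0 < Q := sk_Qpos P y hP
  have step : ∀ n, (skW P n : ℝ)^2 = ∑ p ∈ P, ∑ q ∈ P,
      (if p ∣ n ∧ q ∣ n then (1:ℝ) else 0) := by
    intro n
    have h1 : (skW P n : ℝ) = ∑ p ∈ P, (if p ∣ n then (1:ℝ) else 0) := by
      unfold skW
      rw [Finset.card_filter]
      push_cast
      rfl
    rw [sq, h1, Finset.sum_mul_sum]
    refine Finset.sum_congr rfl fun p _ => Finset.sum_congr rfl fun q _ => ?_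
    by_cases h1 : p ∣ n <;> by_cases h2 : q ∣ n <;> simp [h1, h2]
  have hsum2 : ∑ n ∈ Finset.range Q, (skW P n : ℝ)^2
      = ∑ p ∈ P, ∑ q ∈ P,
        ((((Finset.range Q).filter (fun n => p ∣ n ∧ q ∣ n)).card : ℝ)) := by
    calc ∑ n ∈ Finset.range Q, (skW P n : ℝ)^2
        = ∑ n ∈ Finset.range Q, ∑ p ∈ P, ∑ q ∈ P,
            (if p ∣ n ∧ q ∣ n then (1:ℝ) else 0) :=
          Finset.sum_congr rfl fun n _ => step n
      _ = ∑ p ∈ P, ∑ n ∈ Finset.range Q, ∑ q ∈ P,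
            (if p ∣ n ∧ q ∣ n then (1:ℝ) else 0) := Finset.sum_comm
      _ = ∑ p ∈ P, ∑ q ∈ P, ∑ n ∈ Finset.range Q,
            (if p ∣ n ∧ q ∣ n then (1:ℝ) else 0) :=
          Finset.sum_congr rfl fun p _ => Finset.sum_comm
      _ = ∑ p ∈ P, ∑ q ∈ P,
            ((((Finset.range Q).filter (fun n => p ∣ n ∧ q ∣ n)).card : ℝ)) := by
          refine Finset.sum_congr rfl fun p _ => Finset.sum_congr rfl fun q _ => ?_
          rw [Finset.card_filter]
          push_cast
          rfl
  have hexp : ∑ n ∈ Finset.range Q, ((skW P n : ℝ) - μ)^2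
      = ∑ n ∈ Finset.range Q, (skW P n : ℝ)^2 - (Q : ℝ) * μ^2 := by
    have hs1 := sk_sumW P y hP
    rw [← hQdef, ← hμ] at hs1
    have : ∀ n, ((skW P n : ℝ) - μ)^2
        = (skW P n : ℝ)^2 - 2 * μ * (skW P n : ℝ) + μ^2 := fun n => by ring
    rw [Finset.sum_congr rfl fun n _ => this n]
    rw [Finset.sum_add_distrib, Finset.sum_sub_distrib, ← Finset.mul_sum, hs1]
    simp [Finset.card_range]
    ring
  have hdiag : ∑ p ∈ P, ∑ q ∈ P,
        ((((Finset.range Q).filter (fun n => p ∣ n ∧ q ∣ n)).card : ℝ))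
      - (Q : ℝ) * μ^2
      = ∑ p ∈ P, (((((Finset.range Q).filter (fun n => p ∣ n ∧ p ∣ n)).card : ℝ))
          - (Q : ℝ) * (1 / p) * (1 / p)) := by
    have hμ2 : (Q : ℝ) * μ^2 = ∑ p ∈ P, ∑ q ∈ P, (Q : ℝ) * (1 / p) * (1 / q) := by
      rw [hμ, sq, Finset.sum_mul_sum]
      rw [Finset.mul_sum]
      refine Finset.sum_congr rfl fun p _ => ?_
      rw [Finset.mul_sum]
      refine Finset.sum_congr rfl fun q _ => ?_
      ring
    rw [hμ2, ← Finset.sum_sub_distrib]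
    refine Finset.sum_congr rfl fun p hp => ?_
    rw [← Finset.sum_sub_distrib]
    apply Finset.sum_eq_single p
    · intro q hq hqp
      rw [sk_cnt_pair P y hP hp hq (Ne.symm hqp)]
      ring
    · intro h
      exact absurd hp h
  rw [hexp]
  have hfinal : ∑ p ∈ P, (((((Finset.range Q).filter (fun n => p ∣ n ∧ p ∣ n)).card : ℝ))
      - (Q : ℝ) * (1 / p) * (1 / p)) ≤ (Q : ℝ) * μ := by
    rw [hμ, Finset.mul_sum]
    apply Finset.sum_le_sum
    intro p hp
    have hcard : (((Finset.range Q).filter (fun n => p ∣ n ∧ p ∣ n)).card : ℝ)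
        = (Q : ℝ) * (1 / p) := by
      have : (Finset.range Q).filter (fun n => p ∣ n ∧ p ∣ n)
          = (Finset.range Q).filter (fun n => p ∣ n) := by
        apply Finset.filter_congr
        intro n _
        simp
      rw [this, sk_card_dvd Q p (hP p hp).1.pos (Finset.dvd_prod_of_mem _ hp),
        Nat.cast_div (Finset.dvd_prod_of_mem _ hp)
          (by exact_mod_cast (hP p hp).1.pos.ne')]
      ring
    rw [hcard]
    have hppos : (0:ℝ) < p := by exact_mod_cast (hP p hp).1.pos
    have hQR : (0:ℝ) ≤ Q := Nat.cast_nonneg _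
    have : (0:ℝ) ≤ (Q : ℝ) * (1 / p) * (1 / p) := by positivity
    linarith
  calc ∑ n ∈ Finset.range Q, (skW P n : ℝ)^2 - (Q : ℝ) * μ^2
      = ∑ p ∈ P, (((((Finset.range Q).filter (fun n => p ∣ n ∧ p ∣ n)).card : ℝ))
          - (Q : ℝ) * (1 / p) * (1 / p)) := by rw [← hdiag, hsum2]
    _ ≤ (Q : ℝ) * μ := hfinal

lemma sk_cheb (Q : ℕ) (W : ℕ → ℕ) (μ t : ℝ) (ht : 0 < t)
    (hE : ∑ n ∈ Finset.range Q, ((W n : ℝ) - μ)^2 ≤ Q * μ)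
    (T : Finset ℕ) (hT : T ⊆ Finset.range Q) (hTd : ∀ n ∈ T, t ≤ |(W n : ℝ) - μ|) :
    (T.card : ℝ) * t^2 ≤ Q * μ := by
  calc (T.card : ℝ) * t^2 = ∑ _n ∈ T, t^2 := by
        rw [Finset.sum_const, nsmul_eq_mul]
    _ ≤ ∑ n ∈ T, ((W n : ℝ) - μ)^2 := by
        apply Finset.sum_le_sum
        intro n hn
        have h := hTd n hn
        calc t^2 ≤ |(W n : ℝ) - μ|^2 := by
              apply pow_le_pow_left₀ ht.le h
          _ = ((W n : ℝ) - μ)^2 := sq_abs _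
    _ ≤ ∑ n ∈ Finset.range Q, ((W n : ℝ) - μ)^2 := by
        apply Finset.sum_le_sum_of_subset_of_nonneg hT
        intro n _ _
        positivity
    _ ≤ Q * μ := hE

end Core

end Aux

set_option maxHeartbeats 2000000

/-- For every `0 < α < 1` and `ε > 0` there is a set `A` of positive integers with
lower density greater than `α` whose product set `A·A` has upper density less than `ε`. -/
theorem stmt19 (α : ℝ) (hα0 : 0 < α) (hα1 : α < 1) (ε : ℝ) (hε : 0 < ε) :
    ∃ A : Set ℕ, 0 ∉ A ∧ α < lowerDensity A ∧
      upperDensity {m : ℕ | ∃ a ∈ A, ∃ a' ∈ A, m = a * a'} < ε := by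
  classical
  have h1α : 0 < 1 - α := by linarith
  obtain ⟨K, hK1, hKa, hKe⟩ : ∃ K : ℝ, 1 ≤ K ∧ 65 / (1 - α) ≤ K ∧ 8 / ε ≤ K :=
    ⟨max 1 (max (65 / (1 - α)) (8 / ε)), le_max_left _ _,
      (le_max_left _ _).trans (le_max_right _ _),
      (le_max_right _ _).trans (le_max_right _ _)⟩
  obtain ⟨y, hydef⟩ : ∃ y : ℕ, y = ⌈4 * (K + 1) / ε⌉₊ + 1 := ⟨_, rfl⟩
  obtain ⟨P, hP, hμK, hμK1⟩ := sk_primes y K hK1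
  obtain ⟨Q, hQdef⟩ : ∃ n : ℕ, n = ∏ p ∈ P, p := ⟨_, rfl⟩
  obtain ⟨μ, hμdef⟩ : ∃ m : ℝ, m = ∑ p ∈ P, (1 / p : ℝ) := ⟨_, rfl⟩
  rw [← hμdef] at hμK hμK1
  have hQpos : 0 < Q := hQdef ▸ sk_Qpos P y hP
  have hQR : (0:ℝ) < (Q : ℝ) := by exact_mod_cast hQpos
  have hμpos : (0:ℝ) < μ := lt_of_lt_of_le (by linarith) hμK
  have hE : ∑ n ∈ Finset.range Q, ((skW P n : ℝ) - μ)^2 ≤ (Q : ℝ) * μ := by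
    rw [hQdef, hμdef]
    exact sk_secondMoment P y hP
  have hWmod : ∀ n : ℕ, skW P (n % Q) = skW P n := by
    simp only [hQdef]
    exact fun n => sk_W_mod P y hP n
  have hpdvd : ∀ p ∈ P, p ∣ Q := fun p hp => hQdef ▸ Finset.dvd_prod_of_mem _ hp
  set A : Set ℕ := {n : ℕ | n ≠ 0 ∧ 7 * μ / 8 ≤ (skW P n : ℝ)} with hA
  have hyR : (4 * (K + 1) / ε : ℝ) ≤ (y : ℝ) := by
    rw [hydef]
    push_cast
    linarith [Nat.le_ceil (4 * (K + 1) / ε)]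
  have hypos : (0:ℝ) < (y:ℝ) := by
    rw [hydef]
    push_cast
    positivity
  refine ⟨A, by simp [hA], ?_, ?_⟩
  · -- lower density
    set T : Finset ℕ := (Finset.range Q).filter (fun n => 7 * μ / 8 ≤ (skW P n : ℝ))
      with hT
    have hsub : T ⊆ Finset.range Q := Finset.filter_subset _ _
    have hAcontain : ∀ n : ℕ, 1 ≤ n → n % Q ∈ T → n ∈ A := by
      intro n hn hmem
      rw [hT, Finset.mem_filter] at hmem
      simp only [hA, Set.mem_setOf_eq]
      refine ⟨by omega, ?_⟩
      rw [← hWmod n]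
      exact hmem.2
    have hld := sk_lowerDensity_ge A T Q hQpos hsub hAcontain
    have hbad := sk_cheb Q (skW P) μ (μ/8) (by positivity) hE
      ((Finset.range Q).filter (fun n => ¬ (7 * μ / 8 ≤ (skW P n : ℝ))))
      (Finset.filter_subset _ _) ?_
    swap
    · intro n hn
      rw [Finset.mem_filter] at hn
      have h2 := hn.2
      push_neg at h2
      have h3 : μ/8 ≤ μ - (skW P n : ℝ) := by linarith
      calc μ/8 ≤ μ - (skW P n : ℝ) := h3
        _ ≤ |μ - (skW P n : ℝ)| := le_abs_self _
        _ = |(skW P n : ℝ) - μ| := abs_sub_comm _ _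
    set b : ℕ := ((Finset.range Q).filter (fun n => ¬ (7 * μ / 8 ≤ (skW P n : ℝ)))).card
      with hb
    have hcard : T.card + b = Q := by
      rw [hT, hb, Finset.card_filter_add_card_filter_not, Finset.card_range]
    have hbR : (b : ℝ) * μ ≤ 64 * Q := by
      have h8 : (b:ℝ) * (μ/8)^2 ≤ (Q:ℝ) * μ := hbad
      nlinarith [hμpos]
    have h64 : (64:ℝ) < μ * (1 - α) := by
      have h65 : (65:ℝ) ≤ K * (1 - α) := by
        rw [div_le_iff₀ h1α] at hKa
        linarith
      nlinarith [hμK, h1α, hK1]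
    have hTb : (T.card : ℝ) = (Q:ℝ) - b := by
      have h := congrArg (Nat.cast : ℕ → ℝ) hcard
      rw [Nat.cast_add] at h
      linarith
    have hTQ : α * Q < (T.card : ℝ) := by
      rw [hTb]
      have hblt : (b : ℝ) * μ < ((Q:ℝ) * (1 - α)) * μ := by
        calc (b:ℝ) * μ ≤ 64 * Q := hbR
          _ < ((Q:ℝ) * (1 - α)) * μ := by nlinarith [hQR]
      have hblt2 : (b : ℝ) < (Q:ℝ) * (1 - α) :=
        lt_of_mul_lt_mul_right hblt hμpos.le
      nlinarith
    calc α < (T.card : ℝ) / Q := by rw [lt_div_iff₀ hQR]; linarith [hTQ]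
      _ ≤ lowerDensity A := hld
  · -- upper density
    set B : Set ℕ := {m : ℕ | ∃ a ∈ A, ∃ a' ∈ A, m = a * a'} with hB
    have hQQpos : 0 < Q * Q := Nat.mul_pos hQpos hQpos
    have hWmod2 : ∀ n : ℕ, skW P (n % (Q * Q)) = skW P n := by
      intro n
      unfold skW
      congr 1
      apply Finset.filter_congr
      intro p hp
      exact Nat.dvd_mod_iff ((hpdvd p hp).trans (dvd_mul_right _ _))
    set TS : Finset ℕ := (Finset.range (Q * Q)).filter
      (fun m => 3 * μ / 2 ≤ (skW P m : ℝ) ∨ ∃ p ∈ P, p * p ∣ m) with hTS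
    have hBsub : ∀ m ∈ B, m % (Q * Q) ∈ TS := by
      intro m hm
      rw [hB, Set.mem_setOf_eq] at hm
      obtain ⟨a, ha, a', ha', rfl⟩ := hm
      rw [hA, Set.mem_setOf_eq] at ha ha'
      obtain ⟨ha0, haW⟩ := ha
      obtain ⟨ha0', haW'⟩ := ha'
      have hprop : 3 * μ / 2 ≤ (skW P (a * a') : ℝ) ∨ ∃ p ∈ P, p * p ∣ a * a' := by
        by_cases hsq : ∃ p ∈ P, p * p ∣ a * a'
        · exact Or.inr hsq
        · left
          push_neg at hsq
          have hdisj : Disjoint (P.filter (fun p => p ∣ a)) (P.filter (fun p => p ∣ a')) := by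
            rw [Finset.disjoint_left]
            intro p hp1 hp2
            rw [Finset.mem_filter] at hp1 hp2
            exact hsq p hp1.1 (mul_dvd_mul hp1.2 hp2.2)
          have hunion : P.filter (fun p => p ∣ a * a')
              = P.filter (fun p => p ∣ a) ∪ P.filter (fun p => p ∣ a') := by
            ext p
            simp only [Finset.mem_filter, Finset.mem_union]
            constructor
            · rintro ⟨hp, hd⟩
              rcases ((hP p hp).1.dvd_mul).1 hd with h | h
              · exact Or.inl ⟨hp, h⟩
              · exact Or.inr ⟨hp, h⟩
            · rintro (⟨hp, h⟩ | ⟨hp, h⟩)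
              · exact ⟨hp, h.mul_right _⟩
              · exact ⟨hp, h.mul_left _⟩
          have hcardW : skW P (a * a') = skW P a + skW P a' := by
            unfold skW
            rw [hunion, Finset.card_union_of_disjoint hdisj]
          rw [hcardW]
          push_cast
          linarith
      rw [hTS, Finset.mem_filter]
      refine ⟨Finset.mem_range.2 (Nat.mod_lt _ hQQpos), ?_⟩
      rcases hprop with h | ⟨p, hp, hd⟩
      · left
        rw [hWmod2]
        exact h
      · right
        refine ⟨p, hp, ?_⟩
        rw [Nat.dvd_mod_iff (mul_dvd_mul (hpdvd p hp) (hpdvd p hp))]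
        exact hd
    have hud := sk_upperDensity_le B TS (Q * Q) hQQpos (Finset.filter_subset _ _) hBsub
    set Th : Finset ℕ := (Finset.range Q).filter (fun n => 3 * μ / 2 ≤ (skW P n : ℝ))
      with hTh
    have hThb := sk_cheb Q (skW P) μ (μ/2) (by positivity) hE Th
      (Finset.filter_subset _ _) ?_
    swap
    · intro n hn
      rw [hTh, Finset.mem_filter] at hn
      have h3 : μ/2 ≤ (skW P n : ℝ) - μ := by linarith [hn.2]
      exact h3.trans (le_abs_self _)
    have hsplit : TS.card ≤ Q * Th.card + ∑ p ∈ P, (Q * Q) / (p * p) := by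
      have h1 : TS ⊆ ((Finset.range (Q * Q)).filter (fun m => m % Q ∈ Th))
          ∪ (P.biUnion (fun p => (Finset.range (Q * Q)).filter (fun m => p * p ∣ m))) := by
        intro m hm
        rw [hTS, Finset.mem_filter] at hm
        obtain ⟨hr, hc | hc⟩ := hm
        · apply Finset.mem_union_left
          rw [Finset.mem_filter]
          refine ⟨hr, ?_⟩
          rw [hTh, Finset.mem_filter]
          refine ⟨Finset.mem_range.2 (Nat.mod_lt _ hQpos), ?_⟩
          rw [hWmod m]
          exact hc
        · obtain ⟨p, hp, hd⟩ := hc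
          apply Finset.mem_union_right
          exact Finset.mem_biUnion.2 ⟨p, hp, Finset.mem_filter.2 ⟨hr, hd⟩⟩
      calc TS.card ≤ _ := Finset.card_le_card h1
        _ ≤ ((Finset.range (Q * Q)).filter (fun m => m % Q ∈ Th)).card
            + (P.biUnion (fun p => (Finset.range (Q * Q)).filter (fun m => p * p ∣ m))).card :=
          Finset.card_union_le _ _
        _ ≤ ((Finset.range (Q * Q)).filter (fun m => m % Q ∈ Th)).card
            + ∑ p ∈ P, ((Finset.range (Q * Q)).filter (fun m => p * p ∣ m)).card := by
          gcongr
          exact Finset.card_biUnion_le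
        _ = Q * Th.card + ∑ p ∈ P, (Q * Q) / (p * p) := by
          congr 1
          · exact sk_F_mul Q Th (Finset.filter_subset _ _) Q
          · refine Finset.sum_congr rfl fun p hp => ?_
            exact sk_card_dvd (Q * Q) (p * p)
              (Nat.mul_pos (hP p hp).1.pos (hP p hp).1.pos)
              (mul_dvd_mul (hpdvd p hp) (hpdvd p hp))
    have hThR : (Th.card : ℝ) ≤ (Q:ℝ) * (ε / 2) := by
      have h4 : (Th.card : ℝ) * μ ≤ 4 * Q := by nlinarith [hThb, hμpos]
      have h8 : (8:ℝ) ≤ μ * ε := by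
        have h9 : (8:ℝ) ≤ K * ε := by
          rw [div_le_iff₀ hε] at hKe
          linarith
        nlinarith [hμK, hε, hK1]
      nlinarith [hQR, hμpos, (Nat.cast_nonneg Th.card : (0:ℝ) ≤ (Th.card : ℝ))]
    have hsumR : ((∑ p ∈ P, (Q * Q) / (p * p) : ℕ) : ℝ) ≤ (Q:ℝ) * Q * (ε / 4) := by
      have hterm : ∀ p ∈ P, (((Q * Q) / (p * p) : ℕ) : ℝ)
          ≤ (Q:ℝ) * Q * ((1:ℝ)/y) * (1/p) := by
        intro p hp
        have hppos : (0:ℝ) < p := by exact_mod_cast (hP p hp).1.pos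
        have hyp : (y:ℝ) ≤ (p:ℝ) := by exact_mod_cast (hP p hp).2.le
        have hpp0 : ((p * p : ℕ) : ℝ) ≠ 0 := by
          have := Nat.mul_pos (hP p hp).1.pos (hP p hp).1.pos
          exact_mod_cast this.ne'
        rw [Nat.cast_div (mul_dvd_mul (hpdvd p hp) (hpdvd p hp)) hpp0]
        push_cast
        rw [div_le_iff₀ (by positivity)]
        have hfrac : (Q:ℝ) * Q * ((1:ℝ)/y) * (1/p) * ((p:ℝ) * p) = (Q:ℝ) * Q * (p / y) := by
          field_simp
        rw [hfrac]
        have h1p : (1:ℝ) ≤ (p:ℝ)/y := by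
          rw [le_div_iff₀ hypos]
          linarith
        nlinarith [hQR]
      calc ((∑ p ∈ P, (Q * Q) / (p * p) : ℕ) : ℝ)
          ≤ ∑ p ∈ P, (Q:ℝ) * Q * ((1:ℝ)/y) * (1/p) := by
            rw [Nat.cast_sum]
            exact Finset.sum_le_sum hterm
        _ = (Q:ℝ) * Q * ((1:ℝ)/y) * ∑ p ∈ P, (1/p : ℝ) := by
            rw [Finset.mul_sum]
        _ ≤ (Q:ℝ) * Q * (ε / 4) := by
            rw [← hμdef]
            have hμy : μ * 4 ≤ ε * y := by
              have h1 : 4 * (K + 1) ≤ ε * y := by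
                rw [div_le_iff₀ hε] at hyR
                linarith [mul_comm (y:ℝ) ε]
              nlinarith [hμK1]
            have h2 : ((1:ℝ)/y) * μ ≤ ε / 4 := by
              rw [div_mul_eq_mul_div, one_mul, div_le_div_iff₀ hypos (by norm_num : (0:ℝ) < 4)]
              linarith
            calc (Q:ℝ) * Q * ((1:ℝ)/y) * μ = (Q:ℝ) * Q * (((1:ℝ)/y) * μ) := by ring
              _ ≤ (Q:ℝ) * Q * (ε / 4) :=
                  mul_le_mul_of_nonneg_left h2 (by positivity)
    have hTSR : (TS.card : ℝ) ≤ (Q:ℝ) * Q * (3 * ε / 4) := by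
      have h1 : (TS.card : ℝ) ≤ (Q:ℝ) * Th.card + ((∑ p ∈ P, (Q * Q) / (p * p) : ℕ) : ℝ) := by
        have hcast : ((TS.card : ℕ) : ℝ)
            ≤ ((Q * Th.card + ∑ p ∈ P, (Q * Q) / (p * p) : ℕ) : ℝ) := Nat.cast_le.2 hsplit
        push_cast at hcast
        push_cast
        linarith
      have h2 : (Q:ℝ) * Th.card ≤ (Q:ℝ) * ((Q:ℝ) * (ε/2)) :=
        mul_le_mul_of_nonneg_left hThR hQR.le
      nlinarith [hsumR]
    calc upperDensity B ≤ (TS.card : ℝ) / ((Q * Q : ℕ) : ℝ) := hud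
      _ ≤ 3 * ε / 4 := by
          rw [div_le_iff₀ (by positivity)]
          push_cast
          nlinarith [hTSR]
      _ < ε := by linarith
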